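/- Let X, Y be real Banach spaces, U ⊆ X an open set, f : U → Y a twice continuously (Fréchet) differentiable map, and x₀ ∈ U. Let h ∈ ker(f'(x₀)) and suppose there exist ε > 0 and a twice continuously differentiable curve c : (−ε, ε) → U with c(0) = x₀, c'(0) = h and f(c(t)) = f(x₀) for all t ∈ (−ε, ε). Then for every continuous linear functional u : Y → ℝ that vanishes on the range of f'(x₀), one has u(f''(x₀)(h, h)) = 0, where f''(x₀) denotes the second Fréchet derivative of f at x₀ viewed as a continuous symmetric bilinear map X × X → Y. (This is the abstract form of the Fischer–Marsden obstruction showing that linearization stability forces the vanishing of ∫_M u · (scal^Ch)''_{g₀}(h, h) ν_{g₀} for all u ∈ ker(γ*_{g₀}) and h ∈ ker(γ_{g₀}).) -/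
import Mathlib


/-- abstract Fischer–Marsden obstruction: let `f` be a `C²` map
between Banach spaces, with first derivative `f' x` at each `x ∈ U` and second
derivative `f''` at `x₀`. If `h ∈ ker f'(x₀)` is tangent to a `C²` curve `c`
through `x₀` along which `f` is constant, then every continuous linear
functional `u` vanishing on the range of `f'(x₀)` satisfies
`u (f''(x₀)(h, h)) = 0`. -/
theorem stmt_10 {X Y : Type*}
    [NormedAddCommGroup X] [NormedSpace ℝ X] [CompleteSpace X]
    [NormedAddCommGroup Y] [NormedSpace ℝ Y] [CompleteSpace Y]
    (U : Set X) (hU : IsOpen U) (f : X → Y) (hf : ContDiffOn ℝ 2 f U)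
    (x₀ : X) (hx₀ : x₀ ∈ U)
    (f' : X → X →L[ℝ] Y) (hf' : ∀ x ∈ U, HasFDerivAt f (f' x) x)
    (f'' : X →L[ℝ] X →L[ℝ] Y) (hf'' : HasFDerivAt f' f'' x₀)
    (h : X) (hker : f' x₀ h = 0)
    (ε : ℝ) (hε : 0 < ε) (c : ℝ → X) (c' c'' : ℝ → X)
    (hcU : ∀ t ∈ Set.Ioo (-ε) ε, c t ∈ U)
    (hc0 : c 0 = x₀)
    (hcd : ∀ t ∈ Set.Ioo (-ε) ε, HasDerivAt c (c' t) t)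
    (hcd2 : ∀ t ∈ Set.Ioo (-ε) ε, HasDerivAt c' (c'' t) t)
    (hc'0 : c' 0 = h)
    (hconst : ∀ t ∈ Set.Ioo (-ε) ε, f (c t) = f x₀) :
    ∀ u : Y →L[ℝ] ℝ, (∀ x : X, u (f' x₀ x) = 0) → u (f'' h h) = 0 := by
  intro u hu
  have hIoo : IsOpen (Set.Ioo (-ε) ε) := isOpen_Ioo
  have h0mem : (0:ℝ) ∈ Set.Ioo (-ε) ε := ⟨by linarith, hε⟩
  -- Step 1: f'(c t)(c' t) = 0 on the interval
  have hphi0 : ∀ t ∈ Set.Ioo (-ε) ε, f' (c t) (c' t) = 0 := by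
    intro t ht
    have h1 : HasDerivAt (fun s => f (c s)) (f' (c t) (c' t)) t :=
      (hf' (c t) (hcU t ht)).comp_hasDerivAt t (hcd t ht)
    have h2 : HasDerivAt (fun s => f (c s)) 0 t := by
      have : (fun s => f (c s)) =ᶠ[nhds t] fun _ => f x₀ :=
        Filter.eventuallyEq_of_mem (hIoo.mem_nhds ht) hconst
      exact (hasDerivAt_const t (f x₀)).congr_of_eventuallyEq this
    exact h1.unique h2
  -- Step 2: differentiate t ↦ f'(c t)(c' t) at 0
  have hA : HasDerivAt (fun t => f' (c t)) (f'' h) 0 := by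
    have hx : HasFDerivAt f' f'' (c 0) := hc0 ▸ hf''
    have := hx.comp_hasDerivAt 0 (hcd 0 h0mem)
    rwa [hc'0] at this
  have hc0' : HasDerivAt c' (c'' 0) 0 := hcd2 0 h0mem
  have hphi : HasDerivAt (fun t => f' (c t) (c' t)) (f'' h (c' 0) + f' (c 0) (c'' 0)) 0 :=
    hA.clm_apply hc0'
  have hzero : HasDerivAt (fun t => f' (c t) (c' t)) 0 0 := by
    have : (fun t => f' (c t) (c' t)) =ᶠ[nhds 0] fun _ => (0:Y) :=
      Filter.eventuallyEq_of_mem (hIoo.mem_nhds h0mem) hphi0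
    exact (hasDerivAt_const 0 (0:Y)).congr_of_eventuallyEq this
  have heq : f'' h (c' 0) + f' (c 0) (c'' 0) = 0 := hphi.unique hzero
  rw [hc'0, hc0] at heq
  have := congrArg u heq
  rw [map_add, hu (c'' 0), map_zero] at this
  linarith
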